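/- Let φ : A → B(H) and ψ : B → B(K) be unital completely positive maps on unital C*-algebras with minimal Stinespring dilations (π_φ, V_φ, H^φ) and (π_ψ, V_ψ, H^ψ). Then (π_φ ⊗ π_ψ, V_φ ⊗ V_ψ, H^φ ⊗ H^ψ) is a minimal Stinespring dilation of φ ⊗ ψ : A ⊗ B → B(H ⊗ K); in particular the closed span of (π_φ ⊗ π_ψ)(A ⊗ B)(V_φ ⊗ V_ψ)(H ⊗ K) equals H^φ ⊗ H^ψ. -/

import Mathlib

section stmt17Helpers

variable {Hf Hg HfHg : Type*}
    [NormedAddCommGroup Hf] [InnerProductSpace ℂ Hf]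
    [NormedAddCommGroup Hg] [InnerProductSpace ℂ Hg]
    [NormedAddCommGroup HfHg] [InnerProductSpace ℂ HfHg]

theorem stmt17_norm_tm (tm' : Hf →ₗ[ℂ] Hg →ₗ[ℂ] HfHg)
    (htm' : ∀ (x x' : Hf) (y y' : Hg),
      inner ℂ (tm' x y) (tm' x' y') = (inner ℂ x x' : ℂ) * (inner ℂ y y' : ℂ))
    (x : Hf) (y : Hg) : ‖tm' x y‖ = ‖x‖ * ‖y‖ := by
  have h := htm' x x y y
  rw [inner_self_eq_norm_sq_to_K, inner_self_eq_norm_sq_to_K, inner_self_eq_norm_sq_to_K] at h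
  have h' : ‖tm' x y‖ ^ 2 = ‖x‖ ^ 2 * ‖y‖ ^ 2 := by exact_mod_cast h
  refine (sq_eq_sq₀ (norm_nonneg _) (by positivity)).mp ?_
  rw [h', mul_pow]

end stmt17Helpers

/-- C*-case of Proposition 3: Let `φ : A → B(H)`, `ψ : B → B(K)`
be unital completely positive maps with minimal Stinespring dilations
`(π_φ, V_φ, H^φ)` and `(π_ψ, V_ψ, H^ψ)`.  Then
`(π_φ ⊗ π_ψ, V_φ ⊗ V_ψ, H^φ ⊗ H^ψ)` is a minimal Stinespring dilation of
`φ ⊗ ψ : A ⊗ B → B(H ⊗ K)`; in particular the closed span of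
`(π_φ ⊗ π_ψ)(A ⊗ B)(V_φ ⊗ V_ψ)(H ⊗ K)` is all of `H^φ ⊗ H^ψ`.  Hilbert-space
and minimal C*-tensor products are encoded by bilinear maps with the
appropriate universal relations and dense span. -/
theorem stmt17 {A B : Type*}
    [NormedRing A] [StarRing A] [CStarRing A] [NormedAlgebra ℂ A]
    [CompleteSpace A] [StarModule ℂ A]
    [NormedRing B] [StarRing B] [CStarRing B] [NormedAlgebra ℂ B]
    [CompleteSpace B] [StarModule ℂ B]
    {H K Hf Hg : Type*}
    [NormedAddCommGroup H] [InnerProductSpace ℂ H] [CompleteSpace H]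
    [NormedAddCommGroup K] [InnerProductSpace ℂ K] [CompleteSpace K]
    [NormedAddCommGroup Hf] [InnerProductSpace ℂ Hf] [CompleteSpace Hf]
    [NormedAddCommGroup Hg] [InnerProductSpace ℂ Hg] [CompleteSpace Hg]
    -- the unital completely positive maps φ and ψ
    (φ : A →ₗ[ℂ] (H →L[ℂ] H)) (hφ1 : φ 1 = 1)
    (hφcp : ∀ n : ℕ, ∀ M : Matrix (Fin n) (Fin n) A,
      (∃ N : Matrix (Fin n) (Fin n) A, M = star N * N) →
      ∃ N' : Matrix (Fin n) (Fin n) (H →L[ℂ] H), M.map φ = star N' * N')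
    (ψ : B →ₗ[ℂ] (K →L[ℂ] K)) (hψ1 : ψ 1 = 1)
    (hψcp : ∀ n : ℕ, ∀ M : Matrix (Fin n) (Fin n) B,
      (∃ N : Matrix (Fin n) (Fin n) B, M = star N * N) →
      ∃ N' : Matrix (Fin n) (Fin n) (K →L[ℂ] K), M.map ψ = star N' * N')
    -- minimal Stinespring dilations of φ and ψ
    (πφ : A →⋆ₐ[ℂ] (Hf →L[ℂ] Hf)) (Vφ : H →L[ℂ] Hf)
    (hφdil : ∀ a : A, φ a = (ContinuousLinearMap.adjoint Vφ).comp ((πφ a).comp Vφ))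
    (hφmin : (Submodule.span ℂ
      {x : Hf | ∃ (a : A) (ξ : H), x = πφ a (Vφ ξ)}).topologicalClosure = ⊤)
    (πψ : B →⋆ₐ[ℂ] (Hg →L[ℂ] Hg)) (Vψ : K →L[ℂ] Hg)
    (hψdil : ∀ b : B, ψ b = (ContinuousLinearMap.adjoint Vψ).comp ((πψ b).comp Vψ))
    (hψmin : (Submodule.span ℂ
      {x : Hg | ∃ (b : B) (η : K), x = πψ b (Vψ η)}).topologicalClosure = ⊤)
    -- the Hilbert tensor products H ⊗ K and H^φ ⊗ H^ψ
    {HK : Type*} [NormedAddCommGroup HK] [InnerProductSpace ℂ HK] [CompleteSpace HK]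
    (tm : H →ₗ[ℂ] K →ₗ[ℂ] HK)
    (htm : ∀ (h h' : H) (k k' : K),
      inner ℂ (tm h k) (tm h' k') = (inner ℂ h h' : ℂ) * (inner ℂ k k' : ℂ))
    (htmdense : (Submodule.span ℂ {x : HK | ∃ h k, x = tm h k}).topologicalClosure = ⊤)
    {HfHg : Type*} [NormedAddCommGroup HfHg] [InnerProductSpace ℂ HfHg] [CompleteSpace HfHg]
    (tm' : Hf →ₗ[ℂ] Hg →ₗ[ℂ] HfHg)
    (htm' : ∀ (x x' : Hf) (y y' : Hg),
      inner ℂ (tm' x y) (tm' x' y') = (inner ℂ x x' : ℂ) * (inner ℂ y y' : ℂ))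
    (htmdense' : (Submodule.span ℂ {z : HfHg | ∃ x y, z = tm' x y}).topologicalClosure = ⊤)
    -- the minimal C*-tensor product A ⊗ B
    {AB : Type*} [NormedRing AB] [StarRing AB] [CStarRing AB] [NormedAlgebra ℂ AB]
    [CompleteSpace AB] [StarModule ℂ AB]
    (j : A → B → AB)
    (hadd₁ : ∀ a a' b, j (a + a') b = j a b + j a' b)
    (hadd₂ : ∀ a b b', j a (b + b') = j a b + j a b')
    (hsmul₁ : ∀ (z : ℂ) a b, j (z • a) b = z • j a b)
    (hsmul₂ : ∀ (z : ℂ) a b, j a (z • b) = z • j a b)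
    (hmul : ∀ a a' b b', j a b * j a' b' = j (a * a') (b * b'))
    (hstar : ∀ a b, star (j a b) = j (star a) (star b))
    (hone : j 1 1 = 1)
    (hnorm : ∀ a b, ‖j a b‖ = ‖a‖ * ‖b‖)
    (hdense : (Submodule.span ℂ {x : AB | ∃ a b, x = j a b}).topologicalClosure = ⊤)
    -- the tensor maps φ ⊗ ψ, π_φ ⊗ π_ψ and V_φ ⊗ V_ψ
    (Φ : AB →ₗ[ℂ] (HK →L[ℂ] HK)) (hΦcont : Continuous Φ)
    (hΦ : ∀ (a : A) (b : B) (h : H) (k : K), (Φ (j a b)) (tm h k) = tm (φ a h) (ψ b k))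
    (Pt : AB →⋆ₐ[ℂ] (HfHg →L[ℂ] HfHg))
    (hPt : ∀ (a : A) (b : B) (x : Hf) (y : Hg),
      (Pt (j a b)) (tm' x y) = tm' (πφ a x) (πψ b y))
    (VW : HK →L[ℂ] HfHg)
    (hVW : ∀ (h : H) (k : K), VW (tm h k) = tm' (Vφ h) (Vψ k)) :
    -- (π_φ ⊗ π_ψ, V_φ ⊗ V_ψ, H^φ ⊗ H^ψ) is a Stinespring dilation of φ ⊗ ψ …
    (∀ u : AB, Φ u = (ContinuousLinearMap.adjoint VW).comp ((Pt u).comp VW)) ∧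
    -- … and it is minimal
    (Submodule.span ℂ
      {z : HfHg | ∃ (u : AB) (ξ : HK), z = Pt u (VW ξ)}).topologicalClosure = ⊤ := by

  letI : CStarAlgebra AB := {}
  have hPtCont : Continuous Pt :=
    AddMonoidHomClass.continuous_of_bound Pt.toNonUnitalStarAlgHom 1
      (by simpa only [one_mul] using fun a =>
        NonUnitalStarAlgHom.norm_apply_le Pt.toNonUnitalStarAlgHom a)
  have htmnorm' : ∀ (x : Hf) (y : Hg), ‖tm' x y‖ = ‖x‖ * ‖y‖ := stmt17_norm_tm tm' htm'
  -- the continuous version of `tm'` in each variable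
  set L : Hf → Hg →L[ℂ] HfHg := fun x =>
    (tm' x).mkContinuous ‖x‖ (fun y => le_of_eq (htmnorm' x y)) with hL
  set R : Hg → Hf →L[ℂ] HfHg := fun y =>
    (tm'.flip y).mkContinuous ‖y‖ (fun x => le_of_eq (by
      rw [LinearMap.flip_apply, htmnorm']; ring)) with hR
  have hLapp : ∀ x y, L x y = tm' x y := fun x y => rfl
  have hRapp : ∀ x y, R y x = tm' x y := fun x y => rfl
  have hdenseHK : Dense (↑(Submodule.span ℂ {x : HK | ∃ h k, x = tm h k}) : Set HK) :=
    Submodule.dense_iff_topologicalClosure_eq_top.mpr htmdense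
  constructor
  · -- the dilation property
    set G : AB →ₗ[ℂ] (HK →L[ℂ] HK) :=
      { toFun := fun u => (ContinuousLinearMap.adjoint VW).comp ((Pt u).comp VW)
        map_add' := fun u v => by
          simp only [map_add, ContinuousLinearMap.add_comp, ContinuousLinearMap.comp_add]
        map_smul' := fun c u => by
          simp only [map_smul, ContinuousLinearMap.smul_comp, ContinuousLinearMap.comp_smul,
            RingHom.id_apply] } with hG
    have hGcont : Continuous G := by
      exact continuous_const.clm_comp (hPtCont.clm_comp continuous_const)
    have hgen : ∀ (a : A) (b : B), Φ (j a b) = G (j a b) := by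
      intro a b
      apply ContinuousLinearMap.ext_on hdenseHK
      rintro ξ ⟨h, k, rfl⟩
      have key : (innerSL ℂ ((Φ (j a b)) (tm h k))) = innerSL ℂ ((G (j a b)) (tm h k)) := by
        apply ContinuousLinearMap.ext_on hdenseHK
        rintro η ⟨h', k', rfl⟩
        simp only [innerSL_apply_apply]
        show (inner ℂ ((Φ (j a b)) (tm h k)) (tm h' k') : ℂ) =
          inner ℂ ((ContinuousLinearMap.adjoint VW) ((Pt (j a b)) (VW (tm h k)))) (tm h' k')
        rw [hΦ, htm, ContinuousLinearMap.adjoint_inner_left, hVW, hVW, hPt, htm']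
        congr 1
        · rw [hφdil a]
          rw [← ContinuousLinearMap.adjoint_inner_left Vφ]
          rfl
        · rw [hψdil b]
          rw [← ContinuousLinearMap.adjoint_inner_left Vψ]
          rfl
      exact ext_inner_right ℂ (fun v => DFunLike.congr_fun key v)
    have heq : (Φ : AB → (HK →L[ℂ] HK)) = G := by
      refine Continuous.ext_on
        (Submodule.dense_iff_topologicalClosure_eq_top.mpr hdense) hΦcont hGcont
        (LinearMap.eqOn_span' ?_)
      rintro u ⟨a, b, rfl⟩
      exact hgen a b
    exact fun u => congrFun heq u
  · -- minimality
    set M := (Submodule.span ℂ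
      {z : HfHg | ∃ (u : AB) (ξ : HK), z = Pt u (VW ξ)}).topologicalClosure with hM
    have hMclosed : IsClosed (M : Set HfHg) := Submodule.isClosed_topologicalClosure _
    have hgen1 : ∀ (a : A) (b : B) (h : H) (k : K),
        tm' (πφ a (Vφ h)) (πψ b (Vψ k)) ∈ M := by
      intro a b h k
      apply Submodule.le_topologicalClosure
      apply Submodule.subset_span
      exact ⟨j a b, tm h k, by rw [hVW, hPt]⟩
    have step1 : ∀ (a : A) (h : H) (y : Hg), tm' (πφ a (Vφ h)) y ∈ M := by
      intro a h y
      set x := πφ a (Vφ h) with hx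
      have hle : (Submodule.span ℂ
          {w : Hg | ∃ (b : B) (η : K), w = πψ b (Vψ η)}).topologicalClosure ≤
          Submodule.comap ((L x) : Hg →ₗ[ℂ] HfHg) M := by
        refine Submodule.topologicalClosure_minimal _ (Submodule.span_le.mpr ?_) ?_
        · rintro w ⟨b, η, rfl⟩
          exact hgen1 a b h η
        · exact hMclosed.preimage (L x).continuous
      have hy : y ∈ (Submodule.span ℂ
          {w : Hg | ∃ (b : B) (η : K), w = πψ b (Vψ η)}).topologicalClosure := by
        rw [hψmin]; trivial
      exact hle hy
    have hall : ∀ (x : Hf) (y : Hg), tm' x y ∈ M := by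
      intro x y
      have hle : (Submodule.span ℂ
          {w : Hf | ∃ (a : A) (ξ : H), w = πφ a (Vφ ξ)}).topologicalClosure ≤
          Submodule.comap ((R y) : Hf →ₗ[ℂ] HfHg) M := by
        refine Submodule.topologicalClosure_minimal _ (Submodule.span_le.mpr ?_) ?_
        · rintro w ⟨a, ξ, rfl⟩
          exact step1 a ξ y
        · exact hMclosed.preimage (R y).continuous
      have hx : x ∈ (Submodule.span ℂ
          {w : Hf | ∃ (a : A) (ξ : H), w = πφ a (Vφ ξ)}).topologicalClosure := by
        rw [hφmin]; trivial
      exact hle hx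
    have hfinal : (Submodule.span ℂ
        {z : HfHg | ∃ x y, z = tm' x y}).topologicalClosure ≤ M := by
      refine Submodule.topologicalClosure_minimal _ (Submodule.span_le.mpr ?_) hMclosed
      rintro z ⟨x, y, rfl⟩
      exact hall x y
    rw [htmdense'] at hfinal
    exact top_unique hfinal
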